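/- arXiv:2207.01965 — 2 statements merged into one kernel-verified Lean document; each statement's English description precedes it below -/
import Mathlib

section
/- Let H be a complex Hilbert space, ξ ∈ H a unit vector, and let B ∈ B(H) be the orthogonal projection onto the one-dimensional subspace ℂξ. If A ∈ B(H) satisfies ‖A‖ = 1 and ‖A + λB‖² = 1 + |λ|² for all λ ∈ ℂ, then ⟨Aξ, ξ⟩ = 0 and ‖Aξ‖² + ‖A*ξ‖² = 1. -/
private lemma final_contra' (a b r s δ : ℝ) (ha0 : 0 < a) (hb0 : 0 ≤ b) (ha1 : a ≤ 1)
    (hb1 : b ≤ 1) (hδ : δ = a^2 + b^2 - 1) (hr1 : 1 ≤ r)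
    (hrδ : 2*a*b + a^2 + 1 ≤ r*δ) (hs0 : 0 < s) (hs : s * r = a)
    (hmain : b^2 - 2*s*b + 2*r*s*a + r^2 ≤ (1+r^2)*(1+s^2)) : False := by
  have h1 : r*s*a = a^2 := by nlinarith
  have h2 : r^2*s^2 = a^2 := by nlinarith
  have hδle : δ ≤ 2*s*b + s^2 := by nlinarith
  have h3 : r*δ ≤ r*(2*s*b + s^2) := by nlinarith
  have h4 : r*(2*s*b + s^2) = 2*a*b + a*s := by nlinarith
  have h5 : s ≤ a := by nlinarith
  nlinarith [mul_le_mul_of_nonneg_left h5 ha0.le]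

private lemma key_ineq' (t s K C1 C2 : ℝ) (ht : 0 ≤ t) (hs : 0 ≤ s) (hK : 0 ≤ K)
    (hC1 : 0 < C1) (h : K^2 ≤ C1*C2) : 2*t*s*K ≤ C1*t^2 + C2*s^2 := by
  nlinarith [sq_nonneg (C1*t - K*s), sq_nonneg s, mul_nonneg ht hs]


set_option maxHeartbeats 1000000 in
open ContinuousLinearMap in
/-- If `B` is the rank-one orthogonal projection onto `ℂξ` (`ξ` a unit vector), `‖A‖ = 1`
and `A ⊥_P B`, then `⟨Aξ, ξ⟩ = 0` and `‖Aξ‖² + ‖A*ξ‖² = 1`. -/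
theorem orthogonal_to_rank_one_projection
    {H : Type*} [NormedAddCommGroup H] [InnerProductSpace ℂ H] [CompleteSpace H]
    (ξ : H) (hξ : ‖ξ‖ = 1) (A B : H →L[ℂ] H)
    (hB : ∀ x : H, B x = (inner ℂ ξ x : ℂ) • ξ)
    (hA : ‖A‖ = 1)
    (horth : ∀ l : ℂ, ‖A + l • B‖ ^ 2 = 1 + ‖l‖ ^ 2) :
    (inner ℂ (A ξ) ξ : ℂ) = 0 ∧
      ‖A ξ‖ ^ 2 + ‖ContinuousLinearMap.adjoint A ξ‖ ^ 2 = 1 := by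
  have hξξ : (inner ℂ ξ ξ : ℂ) = 1 := by
    rw [inner_self_eq_norm_sq_to_K, hξ]; norm_num
  have hBξ : B ξ = ξ := by rw [hB, hξξ, one_smul]
  -- Step 1 : inner (A ξ) ξ = 0
  have halpha : (inner ℂ (A ξ) ξ : ℂ) = 0 := by
    by_contra hα
    set α : ℂ := inner ℂ (A ξ) ξ with hαdef
    have hαn : (0:ℝ) < ‖α‖ := norm_pos_iff.mpr hα
    set l : ℂ := ((‖α‖:ℂ)^2)⁻¹ * starRingEnd ℂ α with hl
    have hconj : starRingEnd ℂ α * α = (‖α‖:ℂ)^2 := by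
      rw [mul_comm, Complex.mul_conj']
    have hlα : l * α = 1 := by
      rw [hl, mul_assoc, hconj]
      have : (‖α‖:ℂ)^2 ≠ 0 := by
        simpa using pow_ne_zero 2 (Complex.ofReal_ne_zero.mpr (ne_of_gt hαn))
      exact inv_mul_cancel₀ this
    have h1 := horth l
    have h2 : ‖(A + l • B) ξ‖ ≤ ‖A + l • B‖ := by
      simpa [hξ] using (A + l • B).le_opNorm ξ
    have h3 : (A + l • B) ξ = A ξ + l • ξ := by
      simp [ContinuousLinearMap.add_apply, ContinuousLinearMap.smul_apply, hBξ]
    have h4 : ‖A ξ + l • ξ‖^2 = ‖A ξ‖^2 + 2 + ‖l‖^2 := by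
      rw [@norm_add_sq ℂ]
      rw [inner_smul_right, hlα]
      simp [norm_smul, hξ]
    have h5 : ‖(A + l • B) ξ‖^2 ≤ 1 + ‖l‖^2 := by
      rw [← h1]
      exact pow_le_pow_left₀ (norm_nonneg _) h2 2
    rw [h3, h4] at h5
    nlinarith [sq_nonneg ‖A ξ‖]
  refine ⟨halpha, ?_⟩
  set a := ‖ContinuousLinearMap.adjoint A ξ‖ with hadef
  set b := ‖A ξ‖ with hbdef
  have ha0 : 0 ≤ a := norm_nonneg _
  have hb0 : 0 ≤ b := norm_nonneg _
  have hb1 : b ≤ 1 := by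
    have := A.le_opNorm ξ; rw [hA, hξ, one_mul] at this; exact this
  have hadjnorm : ‖ContinuousLinearMap.adjoint A‖ = 1 := by
    rw [show ‖ContinuousLinearMap.adjoint A‖ = ‖A‖ from
      (ContinuousLinearMap.adjoint : (H →L[ℂ] H) ≃ₗᵢ⋆[ℂ] (H →L[ℂ] H)).norm_map A, hA]
  have ha1 : a ≤ 1 := by
    have := (ContinuousLinearMap.adjoint A).le_opNorm ξ
    rw [hadjnorm, hξ, one_mul] at this; exact this
  -- perpendicularity facts
  have hperp : (inner ℂ ξ (ContinuousLinearMap.adjoint A ξ) : ℂ) = 0 := by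
    rw [ContinuousLinearMap.adjoint_inner_right]; exact halpha
  have hperp' : (inner ℂ (ContinuousLinearMap.adjoint A ξ) ξ : ℂ) = 0 := by
    rw [← inner_conj_symm, hperp, map_zero]
  -- Step 2 : 1 ≤ b^2 + a^2
  have hge : 1 ≤ b^2 + a^2 := by
    by_contra hlt
    push_neg at hlt
    set ε : ℝ := 1 - a^2 - b^2 with hε
    have hε0 : 0 < ε := by simp [hε]; linarith
    set r : ℝ := max 2 (8/ε) with hrdef
    have hr2 : 2 ≤ r := le_max_left _ _
    have hr0 : 0 < r := by linarith
    have hre : 8 ≤ r * ε := by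
      have h8 : 8/ε ≤ r := le_max_right _ _
      calc (8:ℝ) = (8/ε) * ε := by field_simp
        _ ≤ r * ε := by exact mul_le_mul_of_nonneg_right h8 hε0.le
    set η : ℝ := ε/2 with hη
    have hdisc : (b + r*a)^2 ≤ (1 - b^2 - η)*(r^2 - η) := by
      rw [hη]
      nlinarith [sq_nonneg (r*a - b), sq_nonneg ε, mul_nonneg ha0 hb0,
        sq_nonneg (a-b), sq_nonneg (a+b),
        mul_le_mul_of_nonneg_left hre (by linarith : (0:ℝ) ≤ r)]
    have hC1 : (0:ℝ) < 1 - b^2 - η := by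
      have : ε ≤ 1 - b^2 := by rw [hε]; nlinarith
      rw [hη]; linarith
    set T : H →L[ℂ] H := A + (r:ℂ) • B with hT
    -- pointwise bound
    have hpt : ∀ x : H, ‖T x‖^2 ≤ (1 + r^2 - η) * ‖x‖^2 := by
      intro x
      set μ : ℂ := inner ℂ ξ x with hμ
      set y : H := x - μ • ξ with hy
      have hxy : x = μ • ξ + y := by rw [hy]; abel
      have hξy : (inner ℂ ξ y : ℂ) = 0 := by
        rw [hy, inner_sub_right, inner_smul_right, hξξ, hμ]; ring
      set t := ‖μ‖ with ht
      set s := ‖y‖ with hs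
      have ht0 : 0 ≤ t := norm_nonneg _
      have hs0 : 0 ≤ s := norm_nonneg _
      have hts : ‖x‖^2 = t^2 + s^2 := by
        calc ‖x‖^2 = ‖μ • ξ + y‖^2 := by rw [← hxy]
          _ = ‖μ • ξ‖^2 + ‖y‖^2 := by
              have := norm_add_sq_eq_norm_sq_add_norm_sq_of_inner_eq_zero (μ • ξ) y
                (by rw [inner_smul_left, hξy, mul_zero])
              simpa [pow_two] using this
          _ = t^2 + s^2 := by rw [norm_smul, hξ, mul_one]
      have hTx : T x = A x + ((r:ℂ) * μ) • ξ := by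
        simp only [hT, ContinuousLinearMap.add_apply, ContinuousLinearMap.smul_apply,
          hB x, ← hμ, smul_smul]
      have hAxξ : (inner ℂ (A x) ξ : ℂ) = inner ℂ x (ContinuousLinearMap.adjoint A ξ) :=
        (ContinuousLinearMap.adjoint_inner_right A x ξ).symm
      have hxAξ : ‖(inner ℂ (A x) ξ : ℂ)‖ ≤ s * a := by
        rw [hAxξ]
        have : (inner ℂ x (ContinuousLinearMap.adjoint A ξ) : ℂ)
            = inner ℂ y (ContinuousLinearMap.adjoint A ξ) := by
          rw [hxy, inner_add_left, inner_smul_left, hperp, mul_zero, zero_add]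
        rw [this]
        exact norm_inner_le_norm _ _
      have hAx : ‖A x‖ ≤ t*b + s := by
        calc ‖A x‖ = ‖μ • A ξ + A y‖ := by rw [hxy]; simp [map_add, map_smul]
          _ ≤ ‖μ • A ξ‖ + ‖A y‖ := norm_add_le _ _
          _ ≤ t*b + s := by
              have h1 : ‖μ • A ξ‖ = t * b := by rw [norm_smul]
              have h2 : ‖A y‖ ≤ s := by
                have := A.le_opNorm y; rwa [hA, one_mul] at this
              linarith
      -- expand the norm
      have hexp : ‖T x‖^2 = ‖A x‖^2 + 2 * RCLike.re ((r:ℂ) * μ * (inner ℂ (A x) ξ : ℂ))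
          + r^2 * t^2 := by
        rw [hTx, @norm_add_sq ℂ, inner_smul_right]
        congr 1
        rw [norm_smul, hξ, mul_one, norm_mul, Complex.norm_real, Real.norm_eq_abs,
          abs_of_nonneg hr0.le, mul_pow, ht]
      have hre_bound : RCLike.re ((r:ℂ) * μ * (inner ℂ (A x) ξ : ℂ)) ≤ r * t * (s * a) := by
        calc RCLike.re ((r:ℂ) * μ * (inner ℂ (A x) ξ : ℂ))
            ≤ ‖(r:ℂ) * μ * (inner ℂ (A x) ξ : ℂ)‖ := RCLike.re_le_norm _
          _ = r * t * ‖(inner ℂ (A x) ξ : ℂ)‖ := by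
              rw [norm_mul, norm_mul, Complex.norm_real, Real.norm_eq_abs,
                abs_of_nonneg hr0.le]
          _ ≤ r * t * (s * a) := by
              apply mul_le_mul_of_nonneg_left hxAξ
              positivity
      have hkey : 2*t*s*(b + r*a) ≤ (1 - b^2 - η)*t^2 + (r^2 - η)*s^2 :=
        key_ineq' t s (b + r*a) _ _ ht0 hs0 (by positivity) hC1 hdisc
      have hAx2 : ‖A x‖^2 ≤ (t*b+s)^2 := by
        apply pow_le_pow_left₀ (norm_nonneg _) hAx
      rw [hexp, hts]
      nlinarith [hre_bound, hAx2, hkey]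
    -- conclude norm bound
    have hM0 : (0:ℝ) ≤ 1 + r^2 - η := by nlinarith
    have hTnorm : ‖T‖ ≤ Real.sqrt (1 + r^2 - η) := by
      apply T.opNorm_le_bound (Real.sqrt_nonneg _)
      intro x
      have h := hpt x
      calc ‖T x‖ = Real.sqrt (‖T x‖^2) := (Real.sqrt_sq (norm_nonneg _)).symm
        _ ≤ Real.sqrt ((1 + r^2 - η) * ‖x‖^2) := Real.sqrt_le_sqrt h
        _ = Real.sqrt (1 + r^2 - η) * ‖x‖ := by
            rw [Real.sqrt_mul hM0, Real.sqrt_sq (norm_nonneg _)]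
    have hT2 : ‖T‖^2 ≤ 1 + r^2 - η := by
      calc ‖T‖^2 ≤ (Real.sqrt (1 + r^2 - η))^2 :=
            pow_le_pow_left₀ (norm_nonneg _) hTnorm 2
        _ = 1 + r^2 - η := Real.sq_sqrt hM0
    have hTeq : ‖T‖^2 = 1 + r^2 := by
      have := horth (r:ℂ)
      rw [hT]
      rw [this, Complex.norm_real, Real.norm_eq_abs, abs_of_nonneg hr0.le]
    rw [hTeq] at hT2
    have : (0:ℝ) < η := by rw [hη]; linarith
    linarith
  -- Step 3 : b^2 + a^2 ≤ 1
  have hle : b^2 + a^2 ≤ 1 := by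
    by_contra hgt
    push_neg at hgt
    have ha0' : 0 < a := by
      rcases lt_or_eq_of_le ha0 with h | h
      · exact h
      · exfalso; nlinarith
    set δ : ℝ := a^2 + b^2 - 1 with hδ
    have hδ0 : 0 < δ := by rw [hδ]; linarith
    set r : ℝ := max 1 ((2*a*b + a^2 + 1)/δ) with hrdef
    have hr1 : 1 ≤ r := le_max_left _ _
    have hr0 : 0 < r := by linarith
    have hrδ : 2*a*b + a^2 + 1 ≤ r * δ := by
      have h8 : (2*a*b + a^2 + 1)/δ ≤ r := le_max_right _ _
      calc 2*a*b + a^2 + 1 = ((2*a*b + a^2 + 1)/δ) * δ := by field_simp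
        _ ≤ r * δ := mul_le_mul_of_nonneg_right h8 hδ0.le
    set s : ℝ := a / r with hsdef
    have hs0 : 0 < s := div_pos ha0' hr0
    have hsr : s * r = a := by rw [hsdef]; field_simp
    set u : H := ((a:ℂ))⁻¹ • (ContinuousLinearMap.adjoint A ξ) with hu
    have hun : ‖u‖ = 1 := by
      rw [hu, norm_smul]
      simp [norm_inv, Complex.norm_real, abs_of_nonneg ha0, ← hadef]
      field_simp
    have hξu : (inner ℂ ξ u : ℂ) = 0 := by
      rw [hu, inner_smul_right, hperp, mul_zero]
    have huA : (inner ℂ u (ContinuousLinearMap.adjoint A ξ) : ℂ) = (a:ℂ) := by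
      rw [hu, inner_smul_left, inner_self_eq_norm_sq_to_K, ← hadef]
      rw [Complex.conj_inv, Complex.conj_ofReal]
      have haC : (a:ℂ) ≠ 0 := Complex.ofReal_ne_zero.mpr (ne_of_gt ha0')
      field_simp
      rfl
    set x : H := ξ + (s:ℂ) • u with hx
    have hξsu : (inner ℂ ξ ((s:ℂ) • u) : ℂ) = 0 := by
      rw [inner_smul_right, hξu, mul_zero]
    have hxn : ‖x‖^2 = 1 + s^2 := by
      have := norm_add_sq_eq_norm_sq_add_norm_sq_of_inner_eq_zero _ _ hξsu
      rw [hx]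
      rw [show ‖ξ + (s:ℂ) • u‖^2 = ‖ξ‖*‖ξ‖ + ‖(s:ℂ) • u‖*‖(s:ℂ) • u‖ by
        rw [← this]; ring]
      rw [hξ, norm_smul, hun, Complex.norm_real, Real.norm_eq_abs, abs_of_nonneg hs0.le]
      ring
    have hξx : (inner ℂ ξ x : ℂ) = 1 := by
      rw [hx, inner_add_right, hξξ, hξsu, add_zero]
    set T : H →L[ℂ] H := A + (r:ℂ) • B with hT
    have hTx : T x = A x + (r:ℂ) • ξ := by
      simp only [hT, ContinuousLinearMap.add_apply, ContinuousLinearMap.smul_apply,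
        hB x, hξx, one_smul]
    have hAxξ : (inner ℂ (A x) ξ : ℂ) = ((s*a : ℝ) : ℂ) := by
      rw [← ContinuousLinearMap.adjoint_inner_right A x ξ]
      rw [hx, inner_add_left, hperp, inner_smul_left, huA, Complex.conj_ofReal]
      push_cast
      ring
    -- lower bound for ‖A x‖^2
    have hAu : ‖A u‖ ≤ 1 := by
      have := A.le_opNorm u; rwa [hA, one_mul, hun] at this
    have hAx2 : b^2 - 2*s*b ≤ ‖A x‖^2 := by
      have hexp : ‖A x‖^2 = b^2 + 2 * (s * RCLike.re (inner ℂ (A ξ) (A u) : ℂ))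
          + s^2 * ‖A u‖^2 := by
        rw [hx, map_add, map_smul, @norm_add_sq ℂ, inner_smul_right]
        rw [norm_smul, Complex.norm_real, Real.norm_eq_abs, abs_of_nonneg hs0.le]
        simp only [← hbdef, mul_pow]
        congr 1
        simp only [RCLike.re_to_complex]
        rw [Complex.re_ofReal_mul]
      have hre : -(b*1) ≤ RCLike.re (inner ℂ (A ξ) (A u) : ℂ) := by
        have h1 : ‖(inner ℂ (A ξ) (A u) : ℂ)‖ ≤ b * 1 := by
          calc ‖(inner ℂ (A ξ) (A u) : ℂ)‖ ≤ ‖A ξ‖ * ‖A u‖ := norm_inner_le_norm _ _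
            _ ≤ b * 1 := by rw [← hbdef]; exact mul_le_mul_of_nonneg_left hAu hb0
        have h2 := RCLike.abs_re_le_norm (inner ℂ (A ξ) (A u) : ℂ)
        have := abs_le.mp (h2.trans h1)
        exact this.1
      nlinarith [sq_nonneg s, sq_nonneg ‖A u‖, mul_nonneg (mul_nonneg hs0.le hs0.le) (sq_nonneg ‖A u‖)]
    -- expand ‖T x‖^2
    have hTx2 : ‖T x‖^2 = ‖A x‖^2 + 2*(r*(s*a)) + r^2 := by
      rw [hTx, @norm_add_sq ℂ, inner_smul_right, hAxξ]
      rw [norm_smul, Complex.norm_real, Real.norm_eq_abs, abs_of_nonneg hr0.le, hξ]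
      congr 2
      · simp only [RCLike.re_to_complex]
        rw [Complex.re_ofReal_mul, Complex.ofReal_re]
      · ring
    -- upper bound from operator norm
    have hTup : ‖T x‖^2 ≤ (1 + r^2) * (1 + s^2) := by
      have h1 : ‖T x‖ ≤ ‖T‖ * ‖x‖ := T.le_opNorm x
      have h2 : ‖T x‖^2 ≤ ‖T‖^2 * ‖x‖^2 := by
        rw [← mul_pow]
        exact pow_le_pow_left₀ (norm_nonneg _) h1 2
      have hTeq : ‖T‖^2 = 1 + r^2 := by
        have := horth (r:ℂ)
        rw [hT, this, Complex.norm_real, Real.norm_eq_abs, abs_of_nonneg hr0.le]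
      rw [hTeq, hxn] at h2
      exact h2
    -- contradiction
    have hmain : b^2 - 2*s*b + 2*r*s*a + r^2 ≤ (1+r^2)*(1+s^2) := by
      rw [hTx2] at hTup
      nlinarith [hAx2, hTup]
    exact final_contra' a b r s δ ha0' hb0 ha1 hb1 hδ hr1 hrδ hs0 hsr hmain
  linarith
end

section
/- Let b ∈ ℝ with 0 < b < 1 and let α, β ∈ ℂ with β ≠ 0 and |α|² ≤ (1 − |β|²)(1 − b²). Define the 3×3 complex matrices A with rows (0,0,1), (0,α,0), (0,β,0) and B = diag(1, b, 0). Then ‖A‖ = 1 = ‖B‖ in the operator norm induced by the Euclidean norm on ℂ³, and ‖A + λB‖² = 1 + |λ|² for all λ ∈ ℂ, i.e. A and B are Pythagoras orthogonal. -/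
open scoped Matrix.Norms.L2Operator

open Matrix in
lemma helper_opnorm (M : Matrix (Fin 3) (Fin 3) ℂ) (c2 : ℝ) (hc : 0 ≤ c2)
    (hub : ∀ x : Fin 3 → ℂ, ∑ i, ‖(M *ᵥ x) i‖ ^ 2 ≤ c2 * ∑ i, ‖x i‖ ^ 2)
    (x₀ : Fin 3 → ℂ) (d : ℝ) (hd : 0 < d) (hx₀ : ∑ i, ‖x₀ i‖ ^ 2 = d)
    (hMx : ∑ i, ‖(M *ᵥ x₀) i‖ ^ 2 = c2 * d) :
    ‖M‖ = Real.sqrt c2 := by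
  rw [Matrix.l2_opNorm_def]
  set T := (Matrix.toEuclideanLin.trans LinearMap.toContinuousLinearMap) M with hT
  have key : ∀ x : EuclideanSpace ℂ (Fin 3),
      ‖T x‖ = Real.sqrt (∑ i, ‖(M *ᵥ (fun i => x i)) i‖ ^ 2) := by
    intro x
    rw [EuclideanSpace.norm_eq]
    rfl
  have keyn : ∀ x : EuclideanSpace ℂ (Fin 3),
      ‖x‖ = Real.sqrt (∑ i, ‖x i‖ ^ 2) := fun x => EuclideanSpace.norm_eq x
  apply le_antisymm
  · apply ContinuousLinearMap.opNorm_le_bound _ (Real.sqrt_nonneg c2)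
    intro x
    rw [key, keyn, ← Real.sqrt_mul hc]
    exact Real.sqrt_le_sqrt (hub _)
  · set y : EuclideanSpace ℂ (Fin 3) := (WithLp.equiv 2 _).symm x₀ with hy
    have hyx : ∀ i, y i = x₀ i := fun i => rfl
    have h1 : ‖T y‖ = Real.sqrt (c2 * d) := by
      rw [key]; simp only [hyx]; rw [hMx]
    have h2 : ‖y‖ = Real.sqrt d := by
      rw [keyn]; simp only [hyx]; rw [hx₀]
    have h3 := T.le_opNorm y
    rw [h1, h2, Real.sqrt_mul hc] at h3
    have hsd : 0 < Real.sqrt d := Real.sqrt_pos.mpr hd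
    calc Real.sqrt c2 = Real.sqrt c2 * Real.sqrt d / Real.sqrt d := by field_simp
      _ ≤ ‖T‖ * Real.sqrt d / Real.sqrt d := by gcongr
      _ = ‖T‖ := by field_simp


/-- For `0 < b < 1`, `β ≠ 0` and `|α|² ≤ (1 − |β|²)(1 − b²)`, the matrices
`A = (0,0,1; 0,α,0; 0,β,0)` and `B = diag(1, b, 0)` have norm one and are Pythagoras
orthogonal. -/
theorem example_pythagoras_orthogonal_pair_3x3
    (b : ℝ) (hb0 : 0 < b) (hb1 : b < 1) (α β : ℂ) (hβ : β ≠ 0)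
    (hαβ : ‖α‖ ^ 2 ≤ (1 - ‖β‖ ^ 2) * (1 - b ^ 2)) :
    ‖(!![0, 0, 1; 0, α, 0; 0, β, 0] : Matrix (Fin 3) (Fin 3) ℂ)‖ = 1 ∧
      ‖(!![1, 0, 0; 0, (b : ℂ), 0; 0, 0, 0] : Matrix (Fin 3) (Fin 3) ℂ)‖ = 1 ∧
      ∀ l : ℂ,
        ‖(!![0, 0, 1; 0, α, 0; 0, β, 0] : Matrix (Fin 3) (Fin 3) ℂ) +
            l • (!![1, 0, 0; 0, (b : ℂ), 0; 0, 0, 0] : Matrix (Fin 3) (Fin 3) ℂ)‖ ^ 2 =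
          1 + ‖l‖ ^ 2 := by
  have ht : (0:ℝ) < 1 - b ^ 2 := by nlinarith
  have hβ2 : ‖β‖ ^ 2 ≤ 1 := by nlinarith [sq_nonneg (‖α‖)]
  have hs : ‖α‖ ^ 2 + ‖β‖ ^ 2 ≤ 1 := by
    nlinarith [mul_nonneg (by nlinarith [sq_nonneg (‖α‖)] :
      (0:ℝ) ≤ 1 - ‖β‖ ^ 2) (sq_nonneg b)]
  refine ⟨?_, ?_, ?_⟩
  · have := helper_opnorm !![0, 0, 1; 0, α, 0; 0, β, 0] 1 zero_le_one
      (fun x => by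
        simp [Matrix.mulVec, dotProduct, Fin.sum_univ_three, norm_mul, mul_pow,
          Matrix.vecHead, Matrix.vecTail]
        nlinarith [mul_le_mul_of_nonneg_right hs (sq_nonneg (‖x 1‖)),
          sq_nonneg (‖x 0‖)])
      ![0, 0, 1] 1 one_pos
      (by simp [Fin.sum_univ_three])
      (by simp [Matrix.mulVec, dotProduct, Fin.sum_univ_three,
        Matrix.vecHead, Matrix.vecTail])
    simpa [Real.sqrt_one] using this
  · have := helper_opnorm !![1, 0, 0; 0, (b : ℂ), 0; 0, 0, 0] 1 zero_le_one
      (fun x => by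
        simp [Matrix.mulVec, dotProduct, Fin.sum_univ_three, norm_mul, mul_pow,
          Complex.norm_real, abs_of_pos hb0, Matrix.vecHead, Matrix.vecTail]
        nlinarith [sq_nonneg (‖x 1‖), sq_nonneg (‖x 2‖),
          mul_le_mul_of_nonneg_right (by nlinarith : b ^ 2 ≤ 1)
            (sq_nonneg (‖x 1‖))])
      ![1, 0, 0] 1 one_pos
      (by simp [Fin.sum_univ_three])
      (by simp [Matrix.mulVec, dotProduct, Fin.sum_univ_three,
        Matrix.vecHead, Matrix.vecTail])
    simpa [Real.sqrt_one] using this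
  · intro l
    have hc : (0:ℝ) ≤ 1 + ‖l‖ ^ 2 := by positivity
    have hc' : (0:ℝ) ≤ 1 + ‖l‖ ^ 2 := by positivity
    have key2 : (‖α‖ + ‖l‖ * b) ^ 2 + ‖β‖ ^ 2
        ≤ 1 + ‖l‖ ^ 2 := by
      nlinarith [sq_nonneg (‖α‖ * b - ‖l‖ * (1 - b ^ 2)),
        norm_nonneg l, norm_nonneg α,
        mul_nonneg (norm_nonneg l) hb0.le]
    have h5a : ‖α + l * b‖ ≤ ‖α‖ + ‖l‖ * b := by
      calc ‖α + l * b‖ ≤ ‖α‖ + ‖l * b‖ :=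
            norm_add_le _ _
        _ = ‖α‖ + ‖l‖ * b := by
            rw [norm_mul, Complex.norm_real, Real.norm_eq_abs, abs_of_pos hb0]
    have h5 : ‖α + l * b‖ ^ 2 ≤ (‖α‖ + ‖l‖ * b) ^ 2 :=
      pow_le_pow_left₀ (norm_nonneg _) h5a 2
    have hmid : ‖α + l * b‖ ^ 2 + ‖β‖ ^ 2 ≤ 1 + ‖l‖ ^ 2 :=
      le_trans (by linarith) key2
    have hM : ‖(!![0, 0, 1; 0, α, 0; 0, β, 0] : Matrix (Fin 3) (Fin 3) ℂ) +
        l • !![1, 0, 0; 0, (b : ℂ), 0; 0, 0, 0]‖ = Real.sqrt (1 + ‖l‖ ^ 2) := by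
      refine helper_opnorm _ _ hc ?_ ![(starRingEnd ℂ) l, 0, 1] (1 + ‖l‖ ^ 2)
        (by positivity) ?_ ?_
      · intro x
        simp only [Matrix.add_mulVec, Matrix.smul_mulVec, Pi.add_apply, Pi.smul_apply,
          smul_eq_mul]
        simp [Matrix.mulVec, dotProduct, Fin.sum_univ_three,
          Matrix.vecHead, Matrix.vecTail]
        rw [show α * x 1 + l * ((b:ℂ) * x 1) = (α + l * (b:ℂ)) * x 1 by ring, norm_mul]
        have h4a : ‖x 2 + l * x 0‖ ≤
            ‖x 2‖ + ‖l‖ * ‖x 0‖ := by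
          calc ‖x 2 + l * x 0‖ ≤ ‖x 2‖ + ‖l * x 0‖ :=
                norm_add_le _ _
            _ = _ := by rw [norm_mul]
        have h4 : ‖x 2 + l * x 0‖ ^ 2 ≤
            (1 + ‖l‖ ^ 2) * (‖x 0‖ ^ 2 + ‖x 2‖ ^ 2) := by
          have := pow_le_pow_left₀ (norm_nonneg _) h4a 2
          nlinarith [sq_nonneg (‖x 0‖ - ‖l‖ * ‖x 2‖), this]
        have h6 : (‖α + l * b‖ ^ 2 + ‖β‖ ^ 2) * ‖x 1‖ ^ 2
            ≤ (1 + ‖l‖ ^ 2) * ‖x 1‖ ^ 2 :=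
          mul_le_mul_of_nonneg_right hmid (sq_nonneg _)
        nlinarith [h4, h6]
      · simp [Fin.sum_univ_three]
        ring
      · simp only [Matrix.add_mulVec, Matrix.smul_mulVec, Pi.add_apply, Pi.smul_apply,
          smul_eq_mul]
        simp [Matrix.mulVec, dotProduct, Fin.sum_univ_three,
          Matrix.vecHead, Matrix.vecTail, Complex.mul_conj]
        rw [show (1 + (Complex.normSq l : ℂ)) = ((1 + Complex.normSq l : ℝ) : ℂ) by
          push_cast; ring]
        rw [Complex.norm_real, Real.norm_eq_abs, abs_of_nonneg (by nlinarith [Complex.normSq_nonneg l]), Complex.normSq_eq_norm_sq]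
        ring
    rw [hM, Real.sq_sqrt hc]
end
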